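/- Let $X$ be a complex normed space, $n \ge 1$, and let $P : X \to \mathbb{C}$ be a continuous $n$-homogeneous polynomial with associated symmetric $n$-linear form $\check P$ (so $P(x) = \check P(x,\dots,x)$). Let $\eta : [0,\infty) \to (0,\infty)$ be decreasing with $\eta(s)\eta(t) \le C\,\eta(s+t)$ for all $s,t \ge 0$ with $C \ge 1$, and set $v(x) = \eta(\|x\|)$. Then $\sup_{x_1,\dots,x_n} |\check P(x_1,\dots,x_n)|\, v(x_1)\cdots v(x_n) \le \frac{C^{n}}{n!}\, \sup_x v(x)|P(x)|$. -/

import Mathlib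

open Finset

noncomputable section

private def sgn : Bool → ℂ := fun b => if b then 1 else -1

private lemma sgn_mul_self (b : Bool) : sgn b * sgn b = 1 := by cases b <;> simp [sgn]

private lemma sgn_not (b : Bool) : sgn (!b) = - sgn b := by cases b <;> simp [sgn]

private lemma abs_sgn (b : Bool) : ‖sgn b‖ = 1 := by cases b <;> simp [sgn]

private lemma coeff_sum (n : ℕ) (f : Fin n → Fin n) :
    (∑ ε : Fin n → Bool, (∏ i, sgn (ε i)) * ∏ i, sgn (ε (f i))) =
      if Function.Bijective f then (2 : ℂ) ^ n else 0 := by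
  by_cases hf : Function.Bijective f
  · rw [if_pos hf]
    have h1 : ∀ ε : Fin n → Bool, (∏ i, sgn (ε i)) * ∏ i, sgn (ε (f i)) = 1 := by
      intro ε
      have h2 : (∏ i, sgn (ε (f i))) = ∏ i, sgn (ε i) :=
        Equiv.prod_comp (Equiv.ofBijective f hf) (fun i => sgn (ε i))
      rw [h2, ← Finset.prod_mul_distrib]
      simp [sgn_mul_self]
    rw [Finset.sum_congr rfl fun ε _ => h1 ε]
    simp
  · rw [if_neg hf]
    have hsurj : ¬ Function.Surjective f := by
      intro h; exact hf (Finite.surjective_iff_bijective.mp h)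
    unfold Function.Surjective at hsurj
    push_neg at hsurj
    obtain ⟨j, hj⟩ := hsurj
    refine Finset.sum_ninvolution (fun ε => Function.update ε j (!ε j)) ?_ ?_
      (fun ε => Finset.mem_univ _) ?_
    · intro ε
      have e1 : (∏ i, sgn (Function.update ε j (!ε j) i)) = - ∏ i, sgn (ε i) := by
        have h2 : ∀ i, sgn (Function.update ε j (!ε j) i) =
            Function.update (fun k => sgn (ε k)) j (sgn (!ε j)) i :=
          fun i => Function.apply_update (fun _ b => sgn b) ε j (!ε j) i
        rw [Finset.prod_congr rfl fun i _ => h2 i,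
          Finset.prod_update_of_mem (Finset.mem_univ j), sgn_not, neg_mul,
          Finset.sdiff_singleton_eq_erase,
          ← Finset.mul_prod_erase Finset.univ (fun k => sgn (ε k)) (Finset.mem_univ j)]
      have e2 : (∏ i, sgn (Function.update ε j (!ε j) (f i))) = ∏ i, sgn (ε (f i)) := by
        refine Finset.prod_congr rfl fun i _ => ?_
        rw [Function.update_of_ne (hj i)]
      rw [e1, e2]; ring
    · intro ε _
      intro h
      have := congrFun h j
      simp at this
    · intro ε
      funext k
      by_cases hk : k = j
      · subst hk; simp
      · simp [Function.update_of_ne hk]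

private lemma card_bij_fun (n : ℕ) :
    (Finset.univ.filter fun f : Fin n → Fin n => Function.Bijective f).card = n.factorial := by
  have e : Equiv.Perm (Fin n) ≃ {f : Fin n → Fin n // Function.Bijective f} :=
    { toFun := fun σ => ⟨σ, σ.bijective⟩
      invFun := fun f => Equiv.ofBijective f.1 f.2
      left_inv := fun σ => by ext x; rfl
      right_inv := fun f => rfl }
  rw [← Fintype.card_subtype]
  rw [← Fintype.card_congr e, Fintype.card_perm, Fintype.card_fin]

private lemma polar {X : Type*} [NormedAddCommGroup X] [NormedSpace ℂ X] (n : ℕ)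
    (A : ContinuousMultilinearMap ℂ (fun _ : Fin n => X) ℂ)
    (hsym : ∀ (σ : Equiv.Perm (Fin n)) (x : Fin n → X), A (x ∘ σ) = A x)
    (x : Fin n → X) :
    (∑ ε : Fin n → Bool, (∏ i, sgn (ε i)) * A (fun _ => ∑ j, sgn (ε j) • x j)) =
      (2 : ℂ) ^ n * n.factorial * A x := by
  classical
  have expand : ∀ ε : Fin n → Bool,
      A (fun _ : Fin n => ∑ j, sgn (ε j) • x j) =
        ∑ f : Fin n → Fin n, (∏ i, sgn (ε (f i))) * A (x ∘ f) := by
    intro ε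
    rw [A.map_sum (g := fun _ j => sgn (ε j) • x j)]
    refine Finset.sum_congr rfl fun f _ => ?_
    have := A.map_smul_univ (fun i => sgn (ε (f i))) (fun i => x (f i))
    rw [this, smul_eq_mul]
    rfl
  calc (∑ ε : Fin n → Bool, (∏ i, sgn (ε i)) * A (fun _ => ∑ j, sgn (ε j) • x j))
      = ∑ ε : Fin n → Bool, ∑ f : Fin n → Fin n,
          ((∏ i, sgn (ε i)) * ∏ i, sgn (ε (f i))) * A (x ∘ f) := by
        refine Finset.sum_congr rfl fun ε _ => ?_
        rw [expand ε, Finset.mul_sum]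
        exact Finset.sum_congr rfl fun f _ => by ring
    _ = ∑ f : Fin n → Fin n,
          (∑ ε : Fin n → Bool, (∏ i, sgn (ε i)) * ∏ i, sgn (ε (f i))) * A (x ∘ f) := by
        rw [Finset.sum_comm]
        exact Finset.sum_congr rfl fun f _ => (Finset.sum_mul _ _ _).symm
    _ = ∑ f : Fin n → Fin n,
          (if Function.Bijective f then (2 : ℂ) ^ n else 0) * A (x ∘ f) := by
        exact Finset.sum_congr rfl fun f _ => by rw [coeff_sum]
    _ = ∑ f ∈ Finset.univ.filter fun f : Fin n → Fin n => Function.Bijective f,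
          (2 : ℂ) ^ n * A (x ∘ f) := by
        rw [Finset.sum_filter]
        refine Finset.sum_congr rfl fun f _ => ?_
        by_cases hf : Function.Bijective f <;> simp [hf]
    _ = ∑ f ∈ Finset.univ.filter fun f : Fin n → Fin n => Function.Bijective f,
          (2 : ℂ) ^ n * A x := by
        refine Finset.sum_congr rfl fun f hf => ?_
        rw [Finset.mem_filter] at hf
        have := hsym (Equiv.ofBijective f hf.2) x
        rw [show x ∘ ⇑(Equiv.ofBijective f hf.2) = x ∘ f from rfl] at this
        rw [this]
    _ = (2 : ℂ) ^ n * n.factorial * A x := by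
        rw [Finset.sum_const, card_bij_fun, nsmul_eq_mul]
        ring

private lemma prod_eta (η : ℝ → ℝ) (C : ℝ) (hC : 1 ≤ C) (hpos : ∀ t, 0 ≤ t → 0 < η t)
    (hsub : ∀ s t, 0 ≤ s → 0 ≤ t → η s * η t ≤ C * η (s + t)) :
    ∀ (m : ℕ) (t : Fin (m + 1) → ℝ), (∀ i, 0 ≤ t i) →
      (∏ i, η (t i)) ≤ C ^ m * η (∑ i, t i) := by
  intro m
  induction m with
  | zero =>
    intro t ht
    simp [Fin.prod_univ_one, Fin.sum_univ_one]
  | succ m ih =>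
    intro t ht
    have hC0 : (0:ℝ) ≤ C := le_trans zero_le_one hC
    have hsum0 : 0 ≤ ∑ i, t (Fin.succ i) := Finset.sum_nonneg fun i _ => ht _
    calc (∏ i, η (t i)) = η (t 0) * ∏ i, η (t (Fin.succ i)) := by
          rw [Fin.prod_univ_succ]
      _ ≤ η (t 0) * (C ^ m * η (∑ i, t (Fin.succ i))) := by
          refine mul_le_mul_of_nonneg_left (ih _ fun i => ht _) (le_of_lt (hpos _ (ht 0)))
      _ = C ^ m * (η (t 0) * η (∑ i, t (Fin.succ i))) := by ring
      _ ≤ C ^ m * (C * η (t 0 + ∑ i, t (Fin.succ i))) := by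
          exact mul_le_mul_of_nonneg_left (hsub _ _ (ht 0) hsum0) (pow_nonneg hC0 m)
      _ = C ^ (m + 1) * η (∑ i, t i) := by
          conv_rhs => rw [Fin.sum_univ_succ]
          ring

end

theorem stmt6 {X : Type*} [NormedAddCommGroup X] [NormedSpace ℂ X] (n : ℕ) (hn : 1 ≤ n)
    (A : ContinuousMultilinearMap ℂ (fun _ : Fin n => X) ℂ)
    (hsym : ∀ (σ : Equiv.Perm (Fin n)) (x : Fin n → X), A (x ∘ σ) = A x)
    (P : X → ℂ) (hP : ∀ x, P x = A (fun _ => x))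
    (η : ℝ → ℝ) (C : ℝ) (hC : 1 ≤ C) (hpos : ∀ t, 0 ≤ t → 0 < η t)
    (hdec : ∀ s t, 0 ≤ s → s ≤ t → η t ≤ η s)
    (hsub : ∀ s t, 0 ≤ s → 0 ≤ t → η s * η t ≤ C * η (s + t))
    (v : X → ℝ) (hv : ∀ x, v x = η ‖x‖)
    (hbdd : BddAbove {r : ℝ | ∃ x : X, r = v x * ‖P x‖}) :
    sSup {r : ℝ | ∃ x : Fin n → X, r = ‖A x‖ * ∏ i, v (x i)} ≤
      C ^ n / (n.factorial : ℝ) * sSup {r : ℝ | ∃ x : X, r = v x * ‖P x‖} := by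
  classical
  obtain ⟨m, rfl⟩ : ∃ m, n = m + 1 := ⟨n - 1, (Nat.succ_pred_eq_of_pos hn).symm⟩
  set M := sSup {r : ℝ | ∃ x : X, r = v x * ‖P x‖} with hM
  have hMle : ∀ y : X, v y * ‖P y‖ ≤ M := fun y => le_csSup hbdd ⟨y, rfl⟩
  have hv0 : ∀ y : X, 0 < v y := fun y => by rw [hv]; exact hpos _ (norm_nonneg y)
  have hM0 : 0 ≤ M :=
    le_trans (mul_nonneg (le_of_lt (hv0 0)) (norm_nonneg _)) (hMle 0)
  have hC0 : (0:ℝ) ≤ C := le_trans zero_le_one hC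
  refine csSup_le ⟨_, ⟨fun _ => (0:X), rfl⟩⟩ ?_
  rintro r ⟨x, rfl⟩
  have key : ∀ ε : Fin (m+1) → Bool,
      ‖P (∑ j, sgn (ε j) • x j)‖ * ∏ i, v (x i) ≤ C ^ m * M := by
    intro ε
    set y := ∑ j, sgn (ε j) • x j with hy
    have hnorm : ‖y‖ ≤ ∑ j, ‖x j‖ := by
      refine le_trans (norm_sum_le _ _) (le_of_eq ?_)
      refine Finset.sum_congr rfl fun j _ => ?_
      rw [norm_smul]
      cases ε j <;> simp [sgn]
    have h1 : (∏ i, v (x i)) ≤ C ^ m * η (∑ i, ‖x i‖) := by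
      have h0 := prod_eta η C hC hpos hsub m (fun i => ‖x i‖) (fun i => norm_nonneg _)
      calc (∏ i, v (x i)) = ∏ i, η ‖x i‖ := Finset.prod_congr rfl fun i _ => by rw [hv]
        _ ≤ C ^ m * η (∑ i, ‖x i‖) := h0
    have h2 : η (∑ i, ‖x i‖) ≤ v y := by
      rw [hv]; exact hdec _ _ (norm_nonneg y) hnorm
    calc ‖P y‖ * ∏ i, v (x i)
        ≤ ‖P y‖ * (C ^ m * η (∑ i, ‖x i‖)) :=
          mul_le_mul_of_nonneg_left h1 (norm_nonneg _)
      _ ≤ ‖P y‖ * (C ^ m * v y) :=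
          mul_le_mul_of_nonneg_left
            (mul_le_mul_of_nonneg_left h2 (pow_nonneg hC0 m)) (norm_nonneg _)
      _ = C ^ m * (v y * ‖P y‖) := by ring
      _ ≤ C ^ m * M := mul_le_mul_of_nonneg_left (hMle y) (pow_nonneg hC0 m)
  have hpolar := polar (m+1) A hsym x
  have hprod : 0 < ∏ i, v (x i) := Finset.prod_pos fun i _ => hv0 _
  have h3 : (2:ℝ) ^ (m+1) * (m+1).factorial * ‖A x‖ ≤
      ∑ ε : Fin (m+1) → Bool, ‖P (∑ j, sgn (ε j) • x j)‖ := by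
    have h4 : ‖(2:ℂ) ^ (m+1) * ((m+1).factorial : ℂ) * A x‖ =
        (2:ℝ) ^ (m+1) * (m+1).factorial * ‖A x‖ := by
      rw [norm_mul, norm_mul, norm_pow]; simp
    rw [← h4, ← hpolar]
    refine le_trans (norm_sum_le _ _) (le_of_eq ?_)
    refine Finset.sum_congr rfl fun ε _ => ?_
    rw [norm_mul, hP]
    have h5 : ‖∏ i, sgn (ε i)‖ = 1 := by rw [norm_prod]; simp [abs_sgn]
    rw [h5, one_mul]
  have habs : (2:ℝ) ^ (m+1) * (m+1).factorial * (‖A x‖ * ∏ i, v (x i)) ≤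
      2 ^ (m+1) * (C ^ m * M) := by
    calc (2:ℝ) ^ (m+1) * (m+1).factorial * (‖A x‖ * ∏ i, v (x i))
        = ((2:ℝ) ^ (m+1) * (m+1).factorial * ‖A x‖) * ∏ i, v (x i) := by ring
      _ ≤ (∑ ε : Fin (m+1) → Bool, ‖P (∑ j, sgn (ε j) • x j)‖) * ∏ i, v (x i) :=
          mul_le_mul_of_nonneg_right h3 (le_of_lt hprod)
      _ = ∑ ε : Fin (m+1) → Bool, ‖P (∑ j, sgn (ε j) • x j)‖ * ∏ i, v (x i) :=
          Finset.sum_mul _ _ _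
      _ ≤ ∑ _ε : Fin (m+1) → Bool, C ^ m * M := Finset.sum_le_sum fun ε _ => key ε
      _ = 2 ^ (m+1) * (C ^ m * M) := by
          rw [Finset.sum_const, Finset.card_univ, nsmul_eq_mul]
          simp
  have h2n : (0:ℝ) < 2 ^ (m+1) := by positivity
  have hfac : (0:ℝ) < ((m+1).factorial : ℝ) := by exact_mod_cast (m+1).factorial_pos
  have hL : ‖A x‖ * ∏ i, v (x i) ≤ C ^ m * M / ((m+1).factorial : ℝ) := by
    rw [le_div_iff₀ hfac]
    nlinarith [habs, h2n]
  have hCC : C ^ m ≤ C ^ (m+1) := by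
    rw [pow_succ]; exact le_mul_of_one_le_right (pow_nonneg hC0 m) hC
  calc ‖A x‖ * ∏ i, v (x i) ≤ C ^ m * M / ((m+1).factorial : ℝ) := hL
    _ ≤ C ^ (m+1) * M / ((m+1).factorial : ℝ) := by
        exact div_le_div₀ (mul_nonneg (pow_nonneg hC0 _) hM0)
          (mul_le_mul_of_nonneg_right hCC hM0) hfac le_rfl
    _ = C ^ (m+1) / ((m+1).factorial : ℝ) * M := by ring
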